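/- There exists a function φ : ℝ_{>0} → ℝ_{>0} such that for every c > 0, every n ∈ ℕ with n ≥ 2, every integer i with 1 ≤ i ≤ n − ⌊log^{2.5} n⌋, all x, α, β ∈ ℤ and every ε ∈ [-1,1] satisfying |α| ≤ √(c·s_i·log n), |x| ≤ √(c·ℓ_i·log n), |β| ≤ 1 and |ε| ≤ √(c·log n / s_i), it holds that |exp((α·x + β·x²)/s_{i+1}) − 1| ≤ φ(c)·√(log n)·|x| / ℓ_i. -/
import Mathlib

def lRound (m i : ℕ) : ℕ := m + 1 - i

def sRound (m i : ℕ) : ℕ := ∑ j ∈ Finset.Icc i m, lRound m j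

lemma sRound_two_mul (n i : ℕ) : 2 * sRound n i = (n + 1 - i) * (n + 2 - i) := by
  rcases le_or_gt i n with h | h
  · have h1 : sRound n i = ∑ k ∈ Finset.Icc 1 (n + 1 - i), k := by
      unfold sRound lRound
      apply Finset.sum_nbij' (i := fun j => n + 1 - j) (j := fun k => n + 1 - k)
      all_goals intro a ha <;> simp [Finset.mem_Icc] at * <;> omega
    have h2 : Finset.Icc 1 (n + 1 - i) = Finset.range (n + 2 - i) \ {0} := by
      ext k; simp [Finset.mem_Icc, Finset.mem_range]; omega
    have h3 := Finset.sum_range_id_mul_two (n + 2 - i)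
    have h4 : ∑ k ∈ Finset.range (n + 2 - i), k
        = (∑ k ∈ Finset.Icc 1 (n + 1 - i), k) + 0 := by
      rw [h2, ← Finset.sum_sdiff (by simp [Finset.mem_range]; omega : {0} ⊆ Finset.range (n + 2 - i))]
      simp
    have h5 : n + 2 - i - 1 = n + 1 - i := by omega
    rw [h5, Nat.mul_comm (n + 2 - i) (n + 1 - i)] at h3
    rw [h1]
    omega
  · have h1 : sRound n i = 0 := by
      unfold sRound; rw [Finset.Icc_eq_empty (by omega)]; simp
    have h2 : n + 1 - i = 0 := by omega
    rw [h1, h2]; ring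

lemma exp_sub_one_bound (t B : ℝ) (h : |t| ≤ B) : |Real.exp t - 1| ≤ Real.exp B * |t| := by
  have hB : 0 ≤ B := le_trans (abs_nonneg t) h
  rcases le_or_gt 0 t with ht | ht
  · rw [abs_of_nonneg ht] at *
    rw [abs_of_nonneg (by nlinarith [Real.exp_pos t, Real.add_one_le_exp t] : (0:ℝ) ≤ Real.exp t - 1)]
    have h2 : Real.exp t ≤ Real.exp B := Real.exp_le_exp.2 h
    have h3 := Real.exp_pos t
    have h1 : -t + 1 ≤ (Real.exp t)⁻¹ := by
      rw [← Real.exp_neg]; exact Real.add_one_le_exp (-t)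
    have h6 : (Real.exp t)⁻¹ * Real.exp t = 1 := inv_mul_cancel₀ (ne_of_gt h3)
    have h5 : (1 - t) * Real.exp t ≤ 1 := by
      calc (1 - t) * Real.exp t ≤ (Real.exp t)⁻¹ * Real.exp t :=
            mul_le_mul_of_nonneg_right (by linarith) h3.le
        _ = 1 := h6
    nlinarith [mul_le_mul_of_nonneg_left h2 ht]
  · rw [abs_of_neg ht] at *
    have h1 := Real.add_one_le_exp t
    have h2 : Real.exp t ≤ 1 := by
      rw [← Real.exp_zero]; exact Real.exp_le_exp.2 ht.le
    rw [abs_of_nonpos (by linarith)]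
    have h3 : 1 ≤ Real.exp B := Real.one_le_exp hB
    nlinarith

set_option maxHeartbeats 1600000 in
theorem stmt_10 :
    ∃ φ : ℝ → ℝ, (∀ c : ℝ, 0 < c → 0 < φ c) ∧
      ∀ c : ℝ, 0 < c → ∀ n : ℕ, 2 ≤ n → ∀ i : ℕ, 1 ≤ i →
        (i : ℝ) ≤ (n : ℝ) - (⌊Real.logb 2 n ^ ((5 : ℝ) / 2)⌋₊ : ℝ) →
        ∀ x α β : ℤ, ∀ ε : ℝ, ε ∈ Set.Icc (-1 : ℝ) 1 →
          |(α : ℝ)| ≤ Real.sqrt (c * (sRound n i : ℝ) * Real.logb 2 n) →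
          |(x : ℝ)| ≤ Real.sqrt (c * (lRound n i : ℝ) * Real.logb 2 n) →
          |β| ≤ 1 →
          |ε| ≤ Real.sqrt (c * Real.logb 2 n / (sRound n i : ℝ)) →
          |Real.exp (((α : ℝ) * (x : ℝ) + (β : ℝ) * (x : ℝ) ^ 2) / (sRound n (i + 1) : ℝ)) - 1| ≤
            φ c * Real.sqrt (Real.logb 2 n) * |(x : ℝ)| / (lRound n i : ℝ) := by
  refine ⟨fun c => 8 * Real.sqrt c * Real.exp (8 * c), fun c hc => by positivity, ?_⟩
  intro c hc n hn i hi hfloor x α β ε hε hα hx hβ hεb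
  set L : ℝ := Real.logb 2 n with hLdef
  have hL : 1 ≤ L := by
    rw [hLdef, show (1:ℝ) = Real.logb 2 2 by simp]
    exact Real.logb_le_logb_of_le (by norm_num) (by norm_num) (by exact_mod_cast hn)
  have hLpos : 0 < L := lt_of_lt_of_le one_pos hL
  -- floor facts
  have hfl1 : 1 ≤ ⌊L ^ ((5:ℝ)/2)⌋₊ := by
    apply Nat.le_floor
    push_cast
    calc (1:ℝ) = 1 ^ ((5:ℝ)/2) := by rw [Real.one_rpow]
      _ ≤ L ^ ((5:ℝ)/2) := Real.rpow_le_rpow (by norm_num) hL (by norm_num)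
  have hfn : i + ⌊L ^ ((5:ℝ)/2)⌋₊ ≤ n := by
    have : (i:ℝ) + (⌊L ^ ((5:ℝ)/2)⌋₊ : ℝ) ≤ (n:ℝ) := by linarith
    exact_mod_cast this
  have hi1n : i + 1 ≤ n := by omega
  -- nat facts
  have hlnat : ⌊L ^ ((5:ℝ)/2)⌋₊ + 1 ≤ lRound n i := by unfold lRound; omega
  have h2s' : 2 * sRound n (i+1) = (n - i) * (n + 1 - i) := by
    have := sRound_two_mul n (i+1)
    have e1 : n + 1 - (i+1) = n - i := by omega
    have e2 : n + 2 - (i+1) = n + 1 - i := by omega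
    rw [e1, e2] at this; exact this
  have h2si : 2 * sRound n i = (n + 1 - i) * (n + 2 - i) := sRound_two_mul n i
  have hsPposn : 0 < sRound n (i+1) := by
    have h1 : 1 ≤ n - i := by omega
    have h2 : 1 ≤ n + 1 - i := by omega
    nlinarith [h2s']
  have hk1n : (lRound n i)^2 ≤ 4 * sRound n (i+1) := by
    have ha : lRound n i = (n - i) + 1 := by unfold lRound; omega
    have hb2 : n + 1 - i = (n - i) + 1 := by omega
    rw [hb2] at h2s'
    have h1 : 1 ≤ n - i := by omega
    nlinarith [h2s']
  have hk2n : sRound n i ≤ (lRound n i)^2 := by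
    have ha : n + 2 - i = lRound n i + 1 := by unfold lRound; omega
    have hb : n + 1 - i = lRound n i := by unfold lRound; rfl
    have h1 : 1 ≤ lRound n i := by unfold lRound; omega
    nlinarith [h2si]
  -- real versions
  set lR : ℝ := (lRound n i : ℝ) with hlRdef
  set sP : ℝ := (sRound n (i+1) : ℝ) with hsPdef
  set sI : ℝ := (sRound n i : ℝ) with hsIdef
  have hlRpos : 0 < lR := by
    rw [hlRdef]; exact_mod_cast Nat.lt_of_lt_of_le (by omega) hlnat
  have hlR1 : 1 ≤ lR := by
    rw [hlRdef]; exact_mod_cast Nat.le_of_lt_succ (Nat.lt_succ_of_le (by unfold lRound; omega))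
  have hsPpos : 0 < sP := by rw [hsPdef]; exact_mod_cast hsPposn
  have hk1 : lR^2 ≤ 4 * sP := by rw [hlRdef, hsPdef]; exact_mod_cast hk1n
  have hk2 : sI ≤ lR^2 := by rw [hlRdef, hsIdef]; exact_mod_cast hk2n
  have hlL : L ^ ((5:ℝ)/2) ≤ lR := by
    have h1 : L ^ ((5:ℝ)/2) < (⌊L ^ ((5:ℝ)/2)⌋₊ : ℝ) + 1 := Nat.lt_floor_add_one _
    have h2 : (⌊L ^ ((5:ℝ)/2)⌋₊ : ℝ) + 1 ≤ lR := by rw [hlRdef]; exact_mod_cast hlnat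
    linarith
  have hCL : 0 ≤ c * L := by positivity
  have hsCL : Real.sqrt (c*L) ^ 2 = c * L := Real.sq_sqrt hCL
  have hsCLnn : 0 ≤ Real.sqrt (c*L) := Real.sqrt_nonneg _
  have hslR : Real.sqrt lR ^ 2 = lR := Real.sq_sqrt hlRpos.le
  have hslRnn : 0 ≤ Real.sqrt lR := Real.sqrt_nonneg _
  -- |α| ≤ lR √(cL)
  have hα' : |(α:ℝ)| ≤ lR * Real.sqrt (c*L) := by
    calc |(α:ℝ)| ≤ Real.sqrt (c * sI * L) := hα
      _ ≤ Real.sqrt ((lR * Real.sqrt (c*L))^2) := by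
          apply Real.sqrt_le_sqrt
          rw [mul_pow, hsCL]
          have := mul_le_mul_of_nonneg_right hk2 hCL
          nlinarith
      _ = lR * Real.sqrt (c*L) := Real.sqrt_sq (by positivity)
  have hx1 : |(x:ℝ)| ≤ Real.sqrt lR * Real.sqrt (c*L) := by
    calc |(x:ℝ)| ≤ Real.sqrt (c * lR * L) := hx
      _ ≤ Real.sqrt ((Real.sqrt lR * Real.sqrt (c*L))^2) := by
          apply Real.sqrt_le_sqrt
          rw [mul_pow, hsCL, hslR]
          have hlsq : lR ≤ lR^2 := by nlinarith
          have := mul_le_mul_of_nonneg_right hlsq hCL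
          nlinarith
      _ = Real.sqrt lR * Real.sqrt (c*L) := Real.sqrt_sq (by positivity)
  have hsqrt_lR_le : Real.sqrt lR ≤ lR := by
    nlinarith [hslR, hslRnn]
  have hx2 : |(x:ℝ)| ≤ lR * Real.sqrt (c*L) := by
    calc |(x:ℝ)| ≤ Real.sqrt lR * Real.sqrt (c*L) := hx1
      _ ≤ lR * Real.sqrt (c*L) := mul_le_mul_of_nonneg_right hsqrt_lR_le hsCLnn
  -- numerator bound
  set t : ℝ := ((α:ℝ) * x + β * x^2) / sP with htdef
  have hnum : |(α:ℝ) * x + (β:ℝ) * x^2| ≤ 2 * lR * Real.sqrt (c*L) * |(x:ℝ)| := by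
    have h1 : |(α:ℝ) * x + (β:ℝ) * x^2| ≤ |(α:ℝ)| * |(x:ℝ)| + |(β:ℝ)| * |(x:ℝ)|^2 := by
      calc |(α:ℝ) * x + (β:ℝ) * x^2| ≤ |(α:ℝ) * x| + |(β:ℝ) * x^2| := abs_add_le _ _
        _ = |(α:ℝ)| * |(x:ℝ)| + |(β:ℝ)| * |(x:ℝ)|^2 := by
            rw [abs_mul, abs_mul, abs_pow]
    have hβ' : |(β:ℝ)| ≤ 1 := by exact_mod_cast hβ
    have e1 := mul_le_mul_of_nonneg_right hα' (abs_nonneg ((x:ℝ)))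
    have e2 := mul_le_mul_of_nonneg_right hx2 (abs_nonneg ((x:ℝ)))
    nlinarith [abs_nonneg ((x:ℝ)), abs_nonneg ((α:ℝ)), abs_nonneg ((β:ℝ)), e1, e2]
  have habs_t : |t| ≤ 8 * Real.sqrt (c*L) * |(x:ℝ)| / lR := by
    rw [htdef, abs_div, abs_of_pos hsPpos, div_le_div_iff₀ hsPpos hlRpos]
    calc |(α:ℝ) * x + (β:ℝ) * x^2| * lR ≤ (2 * lR * Real.sqrt (c*L) * |(x:ℝ)|) * lR :=
          mul_le_mul_of_nonneg_right hnum hlRpos.le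
      _ ≤ 8 * Real.sqrt (c*L) * |(x:ℝ)| * sP := by
          have e3 := mul_nonneg hsCLnn (abs_nonneg ((x:ℝ)))
          nlinarith [mul_le_mul_of_nonneg_right hk1 e3]
  -- |t| ≤ 8c
  have hL2 : L ^ 2 ≤ lR := by
    calc L ^ 2 = L ^ ((2:ℝ)) := by rw [← Real.rpow_natCast L 2]; norm_num
      _ ≤ L ^ ((5:ℝ)/2) := Real.rpow_le_rpow_of_exponent_le hL (by norm_num)
      _ ≤ lR := hlL
  have hLl : L ≤ Real.sqrt lR := by
    rw [show L = Real.sqrt (L^2) by rw [Real.sqrt_sq hLpos.le]]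
    exact Real.sqrt_le_sqrt hL2
  have hT : |t| ≤ 8 * c := by
    have h8 : 8 * Real.sqrt (c*L) * |(x:ℝ)| / lR ≤ 8 * c := by
      rw [div_le_iff₀ hlRpos]
      have key : 8 * Real.sqrt (c*L) * |(x:ℝ)| ≤ 8 * (c*L) * Real.sqrt lR := by
        have e4 := mul_le_mul_of_nonneg_left hx1 (by positivity : (0:ℝ) ≤ 8 * Real.sqrt (c*L))
        nlinarith [hsCLnn, hslRnn, hsCL, e4]
      calc 8 * Real.sqrt (c*L) * |(x:ℝ)| ≤ 8 * (c*L) * Real.sqrt lR := key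
        _ ≤ 8 * c * (Real.sqrt lR * Real.sqrt lR) := by
            have := mul_le_mul_of_nonneg_left hLl (by positivity : (0:ℝ) ≤ 8 * c * Real.sqrt lR)
            nlinarith
        _ = 8 * c * lR := by rw [Real.mul_self_sqrt hlRpos.le]
    linarith [habs_t]
  -- final
  have hfin := exp_sub_one_bound t (8*c) hT
  calc |Real.exp (((α:ℝ) * x + (β:ℝ) * x^2) / sP) - 1| = |Real.exp t - 1| := by rw [htdef]
    _ ≤ Real.exp (8*c) * |t| := hfin
    _ ≤ Real.exp (8*c) * (8 * Real.sqrt (c*L) * |(x:ℝ)| / lR) :=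
        mul_le_mul_of_nonneg_left habs_t (Real.exp_pos _).le
    _ = 8 * Real.sqrt c * Real.exp (8 * c) * Real.sqrt L * |(x:ℝ)| / lR := by
        rw [Real.sqrt_mul hc.le]; ring
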